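/- Let $f(x) = \alpha x^4 + \beta x^3 + a_1 x^2 + a_2 x + a_3$ and let $(x_i, y_i)$, $i = 1,2,3$, be points on $y^2 = f(x)$ with $x_1, x_2, x_3$ pairwise distinct, and let $V(x) = b_2 x^2 + b_1 x + b_0$ interpolate these points. Assume $\alpha \neq b_2^2$ and define $x_4 = -x_1 - x_2 - x_3 - \frac{\beta - 2 b_1 b_2}{\alpha - b_2^2}$ and $y_4 = -V(x_4)$. Then $(x_4, y_4)$ also lies on the curve, i.e. $y_4^2 = f(x_4)$. -/
import Mathlib

set_option maxRecDepth 100000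


/-- The fourth intersection point `(x₄, y₄)` of the quartic elliptic curve `y² = f(x)`
with the interpolating parabola `y = V(x)` lies on the curve. -/
theorem stmt1 (α β a1 a2 a3 x1 x2 x3 y1 y2 y3 b0 b1 b2 x4 y4 : ℝ)
    (f V : ℝ → ℝ)
    (hf : ∀ x, f x = α * x ^ 4 + β * x ^ 3 + a1 * x ^ 2 + a2 * x + a3)
    (hV : ∀ x, V x = b2 * x ^ 2 + b1 * x + b0)
    (h12 : x1 ≠ x2) (h13 : x1 ≠ x3) (h23 : x2 ≠ x3)
    (hy1 : y1 ^ 2 = f x1) (hy2 : y2 ^ 2 = f x2) (hy3 : y3 ^ 2 = f x3)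
    (hV1 : V x1 = y1) (hV2 : V x2 = y2) (hV3 : V x3 = y3)
    (hα : α ≠ b2 ^ 2)
    (hx4 : x4 = -x1 - x2 - x3 - (β - 2 * b1 * b2) / (α - b2 ^ 2))
    (hy4 : y4 = -V x4) :
    y4 ^ 2 = f x4 := by
  have hc : α - b2 ^ 2 ≠ 0 := sub_ne_zero_of_ne hα
  have h12' : x1 - x2 ≠ 0 := sub_ne_zero_of_ne h12
  have h13' : x1 - x3 ≠ 0 := sub_ne_zero_of_ne h13
  have h23' : x2 - x3 ≠ 0 := sub_ne_zero_of_ne h23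
  set t : ℝ := (β - 2 * b1 * b2) / (α - b2 ^ 2) with htdef
  have ht : (α - b2 ^ 2) * t = β - 2 * b1 * b2 := mul_div_cancel₀ _ hc
  have h1 : (b2 * x1 ^ 2 + b1 * x1 + b0) ^ 2
      = α * x1 ^ 4 + β * x1 ^ 3 + a1 * x1 ^ 2 + a2 * x1 + a3 := by
    rw [← hV x1, ← hf x1, hV1]; exact hy1
  have h2 : (b2 * x2 ^ 2 + b1 * x2 + b0) ^ 2
      = α * x2 ^ 4 + β * x2 ^ 3 + a1 * x2 ^ 2 + a2 * x2 + a3 := by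
    rw [← hV x2, ← hf x2, hV2]; exact hy2
  have h3 : (b2 * x3 ^ 2 + b1 * x3 + b0) ^ 2
      = α * x3 ^ 4 + β * x3 ^ 3 + a1 * x3 ^ 2 + a2 * x3 + a3 := by
    rw [← hV x3, ← hf x3, hV3]; exact hy3
  rw [hy4, hV x4, hf x4, hx4]
  have key : (x1 - x2) * (x1 - x3) * (x2 - x3) *
      ((-(b2 * (-x1 - x2 - x3 - t) ^ 2 + b1 * (-x1 - x2 - x3 - t) + b0)) ^ 2 -
        (α * (-x1 - x2 - x3 - t) ^ 4 + β * (-x1 - x2 - x3 - t) ^ 3 +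
          a1 * (-x1 - x2 - x3 - t) ^ 2 + a2 * (-x1 - x2 - x3 - t) + a3)) = 0 := by
    linear_combination
      ((-x1 - x2 - x3 - t) - x2) * ((-x1 - x2 - x3 - t) - x3) * (x2 - x3) * h1
      - ((-x1 - x2 - x3 - t) - x1) * ((-x1 - x2 - x3 - t) - x3) * (x1 - x3) * h2
      + ((-x1 - x2 - x3 - t) - x1) * ((-x1 - x2 - x3 - t) - x2) * (x1 - x2) * h3
      + (x1 - x2) * (x1 - x3) * (x2 - x3) * ((-x1 - x2 - x3 - t) - x1) *
        ((-x1 - x2 - x3 - t) - x2) * ((-x1 - x2 - x3 - t) - x3) * ht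
  have hD : (x1 - x2) * (x1 - x3) * (x2 - x3) ≠ 0 :=
    mul_ne_zero (mul_ne_zero h12' h13') h23'
  have := (mul_eq_zero.mp key).resolve_left hD
  linarith [this]
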